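/- For a connected simple graph G and two agents with additive utility functions, there exists a connected allocation that is (3/4)-PMMS (equivalently, since PMMS and MMS coincide for two agents, (3/4)-MMS). -/

import Mathlib

namespace GraphFair

variable {V : Type*}

/-- A bundle is connected if it is empty or induces a connected subgraph of `G`. -/
def BundleConn (G : SimpleGraph V) (B : Finset V) : Prop :=
  B = ∅ ∨ (G.induce (B : Set V)).Connected

/-- A connected allocation of all the items among `n` agents: the bundles cover `V`,
are pairwise disjoint, and each bundle is connected in `G`. -/
def IsConnAlloc (G : SimpleGraph V) {n : ℕ} (A : Fin n → Finset V) : Prop :=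
  (∀ v : V, ∃ i, v ∈ A i) ∧
  (∀ i j : Fin n, i ≠ j → Disjoint (A i) (A j)) ∧
  (∀ i, BundleConn G (A i))

variable [DecidableEq V]

/-- Partitions of `X` into two bundles, each connected in the induced subgraph `G[X]`
(for `Y ⊆ X`, connectivity of `Y` in `G[X]` is the same as connectivity of `Y` in `G`). -/
def Part2 (G : SimpleGraph V) (X : Finset V) : Set (Finset V × Finset V) :=
  {p | p.1 ∪ p.2 = X ∧ Disjoint p.1 p.2 ∧ BundleConn G p.1 ∧ BundleConn G p.2}

/-- The pairwise maximin share of a bundle `X` with respect to utility `u`: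
the maximum over partitions of `X` into two connected bundles of the minimum utility. -/
noncomputable def pmms (G : SimpleGraph V) (u : Finset V → ℝ) (X : Finset V) : ℝ :=
  sSup ((fun p : Finset V × Finset V => min (u p.1) (u p.2)) '' Part2 G X)

/-- The `n`-agent maximin share of the whole vertex set: maximum over partitions of `V`
into `n` connected bundles of the minimum utility of a bundle. -/
noncomputable def mms (G : SimpleGraph V) (u : Finset V → ℝ) (n : ℕ) : ℝ :=
  sSup ((fun A : Fin n → Finset V => ⨅ i, u (A i)) '' {A | IsConnAlloc G A})

/-- Agents `i` and `j` are adjacent under allocation `A`. -/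
def AdjUnder (G : SimpleGraph V) {n : ℕ} (A : Fin n → Finset V) (i j : Fin n) : Prop :=
  ∃ v ∈ A i, ∃ w ∈ A j, G.Adj v w

/-- An allocation is `α`-PMMS if every agent with an empty bundle, and every agent with
respect to each of her neighbours, receives at least `α` times her pairwise maximin share. -/
def IsAlphaPMMS (G : SimpleGraph V) {n : ℕ} (u : Fin n → Finset V → ℝ)
    (A : Fin n → Finset V) (α : ℝ) : Prop :=
  ∀ i j : Fin n, i ≠ j → (A i = ∅ ∨ AdjUnder G A i j) →
    α * pmms G (u i) (A i ∪ A j) ≤ u i (A i)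

/-- An allocation is `α`-MMS if every agent receives at least `α` times her maximin share. -/
def IsAlphaMMS (G : SimpleGraph V) {n : ℕ} (u : Fin n → Finset V → ℝ)
    (A : Fin n → Finset V) (α : ℝ) : Prop :=
  ∀ i : Fin n, α * mms G (u i) n ≤ u i (A i)

/-- An additive (nonnegative) utility function. -/
def AdditiveUtil (u : Finset V → ℝ) : Prop :=
  (∀ X : Finset V, u X = ∑ v ∈ X, u {v}) ∧ ∀ v : V, 0 ≤ u {v}

/-- A binary additive utility function. -/
def BinaryAdditiveUtil (u : Finset V → ℝ) : Prop :=
  (∀ X : Finset V, u X = ∑ v ∈ X, u {v}) ∧ ∀ v : V, u {v} = 0 ∨ u {v} = 1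

/-- A monotone (nonnegative) utility function. -/
def MonotoneUtil (u : Finset V → ℝ) : Prop :=
  (∀ X Y : Finset V, X ⊆ Y → u X ≤ u Y) ∧ 0 ≤ u ∅

/-- An allocation is `α`-EF1. -/
def IsAlphaEF1 {n : ℕ} (u : Fin n → Finset V → ℝ) (A : Fin n → Finset V) (α : ℝ) : Prop :=
  ∀ i j : Fin n, i ≠ j → A j ≠ ∅ → ∃ v ∈ A j, α * u i ((A j).erase v) ≤ u i (A i)

/-- An allocation is EFX (envy-free up to any item). -/
def IsEFX {n : ℕ} (u : Fin n → Finset V → ℝ) (A : Fin n → Finset V) : Prop :=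
  ∀ i j : Fin n, i ≠ j → A j ≠ ∅ → ∀ v ∈ A j, u i ((A j).erase v) ≤ u i (A i)

/-- The number of agents receiving positive utility. -/
noncomputable def nashCount {n : ℕ} (u : Fin n → Finset V → ℝ) (A : Fin n → Finset V) : ℕ :=
  (Finset.univ.filter fun i : Fin n => 0 < u i (A i)).card

/-- The product of the positive utilities. -/
noncomputable def nashProd {n : ℕ} (u : Fin n → Finset V → ℝ) (A : Fin n → Finset V) : ℝ :=
  ∏ i ∈ Finset.univ.filter (fun i : Fin n => 0 < u i (A i)), u i (A i)

/-- A maximum Nash welfare (MNW) connected allocation: maximizes the number of agents with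
positive utility and, subject to that, the product of the positive utilities. -/
def IsMNW (G : SimpleGraph V) {n : ℕ} (u : Fin n → Finset V → ℝ)
    (A : Fin n → Finset V) : Prop :=
  IsConnAlloc G A ∧
  (∀ B : Fin n → Finset V, IsConnAlloc G B → nashCount u B ≤ nashCount u A) ∧
  (∀ B : Fin n → Finset V, IsConnAlloc G B →
    nashCount u B = nashCount u A → nashProd u B ≤ nashProd u A)

/-- `A'` is a Pareto-improvement of `A`. -/
def ParetoImproves {n : ℕ} (u : Fin n → Finset V → ℝ) (A' A : Fin n → Finset V) : Prop :=
  (∀ i, u i (A i) ≤ u i (A' i)) ∧ ∃ j, u j (A j) < u j (A' j)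

/-- A connected allocation is Pareto-optimal if no connected allocation Pareto-improves it. -/
def IsParetoOptimal (G : SimpleGraph V) {n : ℕ} (u : Fin n → Finset V → ℝ)
    (A : Fin n → Finset V) : Prop :=
  ∀ B : Fin n → Finset V, IsConnAlloc G B → ¬ ParetoImproves u B A

/-- The vector of agents' utilities rearranged in increasing order. -/
noncomputable def sortedUtils {n : ℕ} (u : Fin n → Finset V → ℝ)
    (A : Fin n → Finset V) : List ℝ :=
  (((Finset.univ : Finset (Fin n)).val.map fun i => u i (A i)).sort (· ≤ ·))

/-- `A'` is a leximin improvement of `A`: the sorted utility vector of `A'` is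
lexicographically greater than that of `A`. -/
def LeximinImproves {n : ℕ} (u : Fin n → Finset V → ℝ) (A' A : Fin n → Finset V) : Prop :=
  List.Lex (· < ·) (sortedUtils u A) (sortedUtils u A')

/-- A connected leximin allocation. -/
def IsLeximin (G : SimpleGraph V) {n : ℕ} (u : Fin n → Finset V → ℝ)
    (A : Fin n → Finset V) : Prop :=
  IsConnAlloc G A ∧ ∀ B : Fin n → Finset V, IsConnAlloc G B → ¬ LeximinImproves u B A

/-- `G` is a star: there is a central vertex adjacent to exactly all other vertices. -/
def IsStar (G : SimpleGraph V) : Prop :=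
  ∃ c : V, ∀ a b : V, G.Adj a b ↔ a ≠ b ∧ (a = c ∨ b = c)

/-- A submodular utility function. -/
def SubmodularUtil (u : Finset V → ℝ) : Prop :=
  ∀ X Y : Finset V, u (X ∪ Y) + u (X ∩ Y) ≤ u X + u Y

/-- A utility function with binary marginal gains (and `u ∅ = 0`). -/
def BinaryMarginalGains (u : Finset V → ℝ) : Prop :=
  u ∅ = 0 ∧ ∀ (X : Finset V) (v : V),
    u (insert v X) - u X = 0 ∨ u (insert v X) - u X = 1

/-- On the path with `m` vertices (edges numbered `1, …, m-1` from left to right),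
`itv m x y` is the bundle `[x, y]` of all vertices between positions `x` and `y`. -/
def itv (m x y : ℕ) : Finset (Fin m) :=
  Finset.univ.filter fun v : Fin m => x ≤ v.val ∧ v.val < y

end GraphFair

open GraphFair in
/-- For a connected simple graph `G` and two agents with additive utility
functions, there exists a connected allocation that is `(3/4)`-PMMS. -/
theorem exists_three_quarters_pmms_two_agents {V : Type*} [Fintype V] [DecidableEq V]
    (G : SimpleGraph V) (hG : G.Connected)
    (u : Fin 2 → Finset V → ℝ) (hu : ∀ i, AdditiveUtil (u i)) :
    ∃ A : Fin 2 → Finset V, IsConnAlloc G A ∧ IsAlphaPMMS G u A (3 / 4) := by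
  classical
  set X : Finset V := Finset.univ with hX
  have huniv : (G.induce ((X : Finset V) : Set V)).Connected := by
    rw [hX, Finset.coe_univ]
    exact (SimpleGraph.Iso.connected_iff (SimpleGraph.induceUnivIso G)).mpr hG
  have hempty : ∀ i : Fin 2, u i ∅ = 0 := fun i => by
    rw [(hu i).1]; simp
  have hnonneg : ∀ (i : Fin 2) (B : Finset V), 0 ≤ u i B := fun i B => by
    rw [(hu i).1]; exact Finset.sum_nonneg fun v _ => (hu i).2 v
  have hmem0 : ((X, (∅ : Finset V)) : Finset V × Finset V) ∈ Part2 G X := by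
    refine ⟨Finset.union_empty X, Finset.disjoint_empty_right X, Or.inr huniv, Or.inl rfl⟩
  -- the image set
  set f : (Fin 2) → (Finset V × Finset V → ℝ) := fun i p => min (u i p.1) (u i p.2) with hf
  have hfin : ∀ i : Fin 2, ((f i) '' Part2 G X).Finite := fun i =>
    (Set.toFinite (Part2 G X)).image _
  have hne : ∀ i : Fin 2, ((f i) '' Part2 G X).Nonempty := fun i =>
    ⟨f i (X, ∅), Set.mem_image_of_mem _ hmem0⟩
  have hpm_nonneg : ∀ i : Fin 2, 0 ≤ pmms G (u i) X := fun i => by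
    have : f i (X, ∅) = 0 := by simp [hf, hempty i, min_eq_right (hnonneg i X)]
    calc (0:ℝ) = f i (X, ∅) := this.symm
    _ ≤ pmms G (u i) X := le_csSup ((hfin i).bddAbove) (Set.mem_image_of_mem _ hmem0)
  -- pmms ≤ half of total for each agent
  have hhalf : ∀ i : Fin 2, pmms G (u i) X ≤ u i X / 2 := fun i => by
    refine csSup_le (hne i) ?_
    rintro x ⟨p, hp, rfl⟩
    have hsum : u i p.1 + u i p.2 = u i X := by
      rw [(hu i).1 p.1, (hu i).1 p.2, (hu i).1 X, ← Finset.sum_union hp.2.1, hp.1]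
    simp only [hf]
    rcases le_total (u i p.1) (u i p.2) with h | h
    · rw [min_eq_left h]; linarith
    · rw [min_eq_right h]; linarith
  -- attain the sup for agent 0
  have hsupmem := (hne 0).csSup_mem (hfin 0)
  obtain ⟨p, hp, hxeq⟩ := hsupmem
  -- choose orientation so agent 1 prefers the second piece
  obtain ⟨Y, Z, hYZ, hmin⟩ : ∃ Y Z : Finset V, ((Y, Z) : Finset V × Finset V) ∈ Part2 G X ∧
      min (u 0 Y) (u 0 Z) = pmms G (u 0) X ∧ u 1 X / 2 ≤ u 1 Z := by
    have hsum1 : u 1 p.1 + u 1 p.2 = u 1 X := by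
      rw [(hu 1).1 p.1, (hu 1).1 p.2, (hu 1).1 X, ← Finset.sum_union hp.2.1, hp.1]
    rcases le_total (u 1 p.1) (u 1 p.2) with h | h
    · exact ⟨p.1, p.2, hp, hxeq, by linarith⟩
    · refine ⟨p.2, p.1, ⟨by rw [Finset.union_comm]; exact hp.1, hp.2.1.symm, hp.2.2.2, hp.2.2.1⟩,
        by rw [min_comm]; exact hxeq, by linarith⟩
  obtain ⟨hopt, hch⟩ := hmin
  refine ⟨![Y, Z], ⟨?_, ?_, ?_⟩, ?_⟩
  · intro v
    have : v ∈ Y ∪ Z := by rw [hYZ.1]; exact Finset.mem_univ v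
    rcases Finset.mem_union.mp this with h | h
    · exact ⟨0, h⟩
    · exact ⟨1, h⟩
  · intro i j hij
    fin_cases i <;> fin_cases j <;> simp_all <;>
      first
      | exact hYZ.2.1
      | exact hYZ.2.1.symm
  · intro i; fin_cases i
    · exact hYZ.2.2.1
    · exact hYZ.2.2.2
  · intro i j hij _
    have hU : ∀ (a b : Finset V), a ∪ b = X → True := fun _ _ _ => trivial
    fin_cases i <;> fin_cases j <;> simp_all
    · -- i = 0, j = 1 : 3/4 * pmms over Y ∪ Z ≤ u 0 Y
      rw [hYZ.1]
      have h1 : pmms G (u 0) X ≤ u 0 Y := hopt ▸ min_le_left _ _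
      nlinarith [hpm_nonneg.1]
    · -- i = 1, j = 0
      rw [Finset.union_comm, hYZ.1]
      have h1 : pmms G (u 1) X ≤ u 1 Z := le_trans hhalf.2 hch
      nlinarith [hpm_nonneg.2]
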